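/- arXiv:1809.08192 — 2 statements merged into one kernel-verified Lean document; each statement's English description precedes it below -/
import Mathlib

section
/- Let S* be a finite index set. For each n ∈ S*, let Z_n, F̄_n be real m×m matrices, f_n ∈ ℝᵐ, and d_n ∈ ℝ, and assume M_n = Z_n·F̄_n + I is invertible. Additionally let P be a finite set with matrices F̄_p and vectors f_p, scalars d_p for p ∈ P. Suppose vectors v_s, i_s ∈ ℝᵐ and families (v_n, i_n) satisfy: i_s = Σ_{p∈P}(F̄_p·v_s + d_p·f_p) + Σ_{n∈S*} i_n, i_n = F̄_n·v_n + d_n·f_n, and v_s - v_n = Z_n·i_n for all n ∈ S*. Then i_s = Ā·v_s + b, where Ā = Σ_{p∈P} F̄_p + Σ_{n∈S*} F̄_n·M_n⁻¹ and b = Σ_{p∈P} d_p·f_p + Σ_{n∈S*} d_n·(f_n - F̄_n·M_n⁻¹·Z_n·f_n). -/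
open Matrix

lemma sum_mulVec_aux {m : ℕ} {S : Type*} [Fintype S]
    (A : S → Matrix (Fin m) (Fin m) ℝ) (v : Fin m → ℝ) :
    (∑ n, A n) *ᵥ v = ∑ n, A n *ᵥ v := by
  ext i
  simp [mulVec, dotProduct, Matrix.sum_apply, Finset.sum_mul]
  rw [Finset.sum_comm]

theorem depth_one_reduction {m : ℕ}
    {P S : Type*} [Fintype P] [Fintype S]
    (FbarP : P → Matrix (Fin m) (Fin m) ℝ) (fP : P → Fin m → ℝ) (dP : P → ℝ)
    (Z FbarS : S → Matrix (Fin m) (Fin m) ℝ) (fS : S → Fin m → ℝ) (dS : S → ℝ)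
    (M : S → Matrix (Fin m) (Fin m) ℝ) (hM : ∀ n, M n = Z n * FbarS n + 1)
    (hMinv : ∀ n, IsUnit (M n))
    (vs is : Fin m → ℝ) (vN iN : S → Fin m → ℝ)
    (hkcl : is = (∑ p, (FbarP p *ᵥ vs + dP p • fP p)) + ∑ n, iN n)
    (hfcm : ∀ n, iN n = FbarS n *ᵥ vN n + dS n • fS n)
    (hohm : ∀ n, vs - vN n = Z n *ᵥ iN n) :
    is = (∑ p, FbarP p + ∑ n, FbarS n * (M n)⁻¹) *ᵥ vs +
      ((∑ p, dP p • fP p) +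
        ∑ n, dS n • (fS n - FbarS n *ᵥ ((M n)⁻¹ *ᵥ (Z n *ᵥ fS n)))) := by
  have key : ∀ n, iN n = (FbarS n * (M n)⁻¹) *ᵥ vs +
      dS n • (fS n - FbarS n *ᵥ ((M n)⁻¹ *ᵥ (Z n *ᵥ fS n))) := by
    intro n
    have h1 : M n *ᵥ vN n = vs - dS n • (Z n *ᵥ fS n) := by
      rw [hM, add_mulVec, one_mulVec, ← mulVec_mulVec]
      have h2 := hohm n
      rw [hfcm n, mulVec_add, mulVec_smul] at h2
      have h3 : vs = Z n *ᵥ (FbarS n *ᵥ vN n) + dS n • (Z n *ᵥ fS n) + vN n :=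
        sub_eq_iff_eq_add.mp h2
      rw [h3]; abel
    have hdet := (Matrix.isUnit_iff_isUnit_det _).mp (hMinv n)
    have hv : vN n = (M n)⁻¹ *ᵥ (vs - dS n • (Z n *ᵥ fS n)) := by
      rw [← h1, mulVec_mulVec, nonsing_inv_mul _ hdet, one_mulVec]
    rw [hfcm n, hv, mulVec_sub, mulVec_sub, mulVec_smul, mulVec_smul, mulVec_mulVec,
      smul_sub]
    abel
  rw [hkcl]
  simp_rw [key, Finset.sum_add_distrib, add_mulVec, sum_mulVec_aux]
  abel
end

section
/- Suppose for each node n in a finite rooted tree T we have an affine map i = A_n·v + b_n (its FCM relation), and each edge (parent m, child n) has impedance matrix Z_{m,n} with Z_{m,n}·A_n' + I invertible at every stage of the bottom-up reduction, where A_n' is the voltage-block of the reduced FCM of the subtree rooted at n. Then there exists a unique affine map (A_T, b_T) such that the current entering the root equals A_T·v_root + b_T for every root voltage v_root, obtained by iterating: (1) summing affine maps of converters at a common node, and (2) the depth-one reduction A ↦ A·(Z·A + I)⁻¹, b ↦ b − A·(Z·A + I)⁻¹·Z·b. -/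
open Matrix

/-- A finite rooted tree of converters: each node carries the affine FCM
relation `i = A ·ᵥ v + b` of the converters attached at that node, and each
edge to a child carries the line impedance matrix `Z`. -/
inductive FTree (m : ℕ) : Type
  | node (A : Matrix (Fin m) (Fin m) ℝ) (b : Fin m → ℝ)
      (children : List (Matrix (Fin m) (Fin m) ℝ × FTree m)) : FTree m

/-- Bottom-up reduction: reduce each child subtree, push it through its line
via `A ↦ A·(Z·A + I)⁻¹`, `b ↦ b − A·(Z·A + I)⁻¹·Z·b`, and sum at the node. -/
noncomputable def FTree.reduce {m : ℕ} : FTree m → Matrix (Fin m) (Fin m) ℝ × (Fin m → ℝ)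
  | .node A b children =>
      let rs := children.attach.map (fun c =>
        let r := FTree.reduce c.1.2
        let Z := c.1.1
        let R := r.1 * (Z * r.1 + 1)⁻¹
        (R, r.2 - R *ᵥ (Z *ᵥ r.2)))
      (A + (rs.map Prod.fst).sum, b + (rs.map Prod.snd).sum)
  decreasing_by
    have h := List.sizeOf_lt_of_mem c.2
    obtain ⟨⟨Z, t⟩, hm⟩ := c
    simp only [Prod.mk.sizeOf_spec, FTree.node.sizeOf_spec] at h ⊢
    omega

/-- The invertibility condition `Z·A' + I` invertible holds at every stage of
the bottom-up reduction. -/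
def FTree.good {m : ℕ} : FTree m → Prop
  | .node _ _ children =>
      ∀ c ∈ children, IsUnit (c.1 * (FTree.reduce c.2).1 + 1) ∧ FTree.good c.2
  decreasing_by
    rename_i hm
    have h := List.sizeOf_lt_of_mem hm
    obtain ⟨Z, t⟩ := c
    simp only [Prod.mk.sizeOf_spec, FTree.node.sizeOf_spec] at h ⊢
    omega

/-- Feasibility of a root voltage/current pair: there exist child voltages and
currents satisfying the child FCM relations (recursively), Ohm's law on each
line, and Kirchhoff's current law at the node. -/
inductive FTree.Feasible {m : ℕ} : FTree m → (Fin m → ℝ) → (Fin m → ℝ) → Prop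
  | node (A : Matrix (Fin m) (Fin m) ℝ) (b : Fin m → ℝ)
      (children : List (Matrix (Fin m) (Fin m) ℝ × FTree m))
      (v i : Fin m → ℝ) (w : ℕ → (Fin m → ℝ) × (Fin m → ℝ))
      (hfeas : ∀ (j : ℕ) (h : j < children.length),
        FTree.Feasible (children.get ⟨j, h⟩).2 (w j).1 (w j).2)
      (hohm : ∀ (j : ℕ) (h : j < children.length),
        v - (w j).1 = (children.get ⟨j, h⟩).1 *ᵥ (w j).2)
      (hkcl : i = A *ᵥ v + b + ∑ j ∈ Finset.range children.length, (w j).2) :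
      FTree.Feasible (.node A b children) v i

/- ### Auxiliary lemmas -/

lemma list_sum_fin {α M : Type*} [AddCommMonoid M] (l : List α) (f : α → M) :
    (l.map f).sum = ∑ j : Fin l.length, f (l.get j) := by
  induction l with
  | nil => simp
  | cons a t ih =>
    rw [List.map_cons, List.sum_cons, ih]
    exact (Fin.sum_univ_succ fun j : Fin (t.length + 1) => f ((a :: t).get j)).symm

lemma sum_mulVec' {m : ℕ} {ι : Type*} (s : Finset ι) (f : ι → Matrix (Fin m) (Fin m) ℝ)
    (v : Fin m → ℝ) : (∑ j ∈ s, f j) *ᵥ v = ∑ j ∈ s, f j *ᵥ v := by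
  induction s using Finset.cons_induction with
  | empty => simp [Matrix.zero_mulVec]
  | cons a s ha ih => simp [Finset.sum_cons, Matrix.add_mulVec, ih]

lemma key_alg {m : ℕ} (A Z : Matrix (Fin m) (Fin m) ℝ) (hu : IsUnit (Z * A + 1))
    (v b x : Fin m → ℝ) :
    x = A *ᵥ (v - Z *ᵥ x) + b ↔
      x = (A * (Z * A + 1)⁻¹) *ᵥ v + (b - (A * (Z * A + 1)⁻¹) *ᵥ (Z *ᵥ b)) := by
  have hdet : IsUnit (Z * A + 1).det := (isUnit_iff_isUnit_det _).1 hu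
  have hu' : IsUnit (1 + A * Z) := by
    rw [isUnit_iff_isUnit_det, det_one_add_mul_comm, ← add_comm (Z * A)]; exact hdet
  have hmulR : (1 + A * Z) * (A * (Z * A + 1)⁻¹) = A := by
    rw [← Matrix.mul_assoc]
    have : (1 + A * Z) * A = A * (Z * A + 1) := by
      rw [add_mul, one_mul, mul_add, mul_one, mul_assoc, add_comm]
    rw [this, Matrix.mul_assoc, Matrix.mul_nonsing_inv _ hdet, Matrix.mul_one]
  have hinj := Matrix.mulVec_injective_iff_isUnit.2 hu'
  have h3 : (1 + A * Z) *ᵥ ((A * (Z * A + 1)⁻¹) *ᵥ v +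
      (b - (A * (Z * A + 1)⁻¹) *ᵥ (Z *ᵥ b))) = A *ᵥ v + b := by
    rw [Matrix.mulVec_add, Matrix.mulVec_sub, Matrix.mulVec_mulVec, hmulR,
      Matrix.mulVec_mulVec, ← Matrix.mul_assoc, Matrix.mul_assoc _ A, hmulR,
      Matrix.add_mulVec, Matrix.one_mulVec, Matrix.mulVec_mulVec]
    abel
  constructor
  · intro h
    have h2 : (1 + A * Z) *ᵥ x = A *ᵥ v + b := by
      rw [Matrix.add_mulVec, Matrix.one_mulVec, ← Matrix.mulVec_mulVec]
      nth_rewrite 1 [h]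
      rw [Matrix.mulVec_sub] at h ⊢
      abel
    exact hinj (h2.trans h3.symm)
  · intro h
    have h2 : (1 + A * Z) *ᵥ x = A *ᵥ v + b := by rw [h]; exact h3
    rw [Matrix.add_mulVec, Matrix.one_mulVec, ← Matrix.mulVec_mulVec] at h2
    rw [Matrix.mulVec_sub]
    linear_combination h2

/-- The map pushing a reduced child FCM through its line. -/
noncomputable def gmap {m : ℕ} (c : Matrix (Fin m) (Fin m) ℝ × FTree m) :
    Matrix (Fin m) (Fin m) ℝ × (Fin m → ℝ) :=
  let r := c.2.reduce
  let R := r.1 * (c.1 * r.1 + 1)⁻¹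
  (R, r.2 - R *ᵥ (c.1 *ᵥ r.2))

lemma reduce_node {m : ℕ} (A : Matrix (Fin m) (Fin m) ℝ) (b : Fin m → ℝ)
    (children : List (Matrix (Fin m) (Fin m) ℝ × FTree m)) :
    (FTree.node A b children).reduce =
      (A + (children.map fun c => (gmap c).1).sum,
       b + (children.map fun c => (gmap c).2).sum) := by
  rw [FTree.reduce]
  simp only [List.map_map]
  exact congrArg₂ Prod.mk
    (congrArg _ (congrArg List.sum (List.attach_map_val (l := children) (f := fun c => (gmap c).1))))
    (congrArg _ (congrArg List.sum (List.attach_map_val (l := children) (f := fun c => (gmap c).2))))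

lemma good_node {m : ℕ} (A : Matrix (Fin m) (Fin m) ℝ) (b : Fin m → ℝ)
    (children : List (Matrix (Fin m) (Fin m) ℝ × FTree m)) :
    (FTree.node A b children).good ↔
      ∀ c ∈ children, IsUnit (c.1 * (FTree.reduce c.2).1 + 1) ∧ FTree.good c.2 := by
  rw [FTree.good]

lemma sizeOf_child_lt {m : ℕ} {c : Matrix (Fin m) (Fin m) ℝ × FTree m}
    {children : List (Matrix (Fin m) (Fin m) ℝ × FTree m)} (hc : c ∈ children)
    (A : Matrix (Fin m) (Fin m) ℝ) (b : Fin m → ℝ) :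
    sizeOf c.2 < sizeOf (FTree.node A b children) := by
  have h := List.sizeOf_lt_of_mem hc
  obtain ⟨Z, t⟩ := c
  simp only [Prod.mk.sizeOf_spec, FTree.node.sizeOf_spec] at h ⊢
  omega

lemma main_iff {m : ℕ} : ∀ (t : FTree m), t.good → ∀ v i : Fin m → ℝ,
    t.Feasible v i ↔ i = t.reduce.1 *ᵥ v + t.reduce.2
  | .node A b children => by
    intro hgood v i
    rw [good_node] at hgood
    rw [reduce_node]
    have ihmain : ∀ (j : ℕ) (h : j < children.length),
        ∀ v' i' : Fin m → ℝ, (children.get ⟨j, h⟩).2.Feasible v' i' ↔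
          i' = (children.get ⟨j, h⟩).2.reduce.1 *ᵥ v' + (children.get ⟨j, h⟩).2.reduce.2 :=
      fun j h => main_iff (children.get ⟨j, h⟩).2
        (hgood _ (children.get_mem _)).2
    have hkey : ∀ (j : ℕ) (h : j < children.length) (x : Fin m → ℝ),
        x = (children.get ⟨j, h⟩).2.reduce.1 *ᵥ (v - (children.get ⟨j, h⟩).1 *ᵥ x)
            + (children.get ⟨j, h⟩).2.reduce.2 ↔
        x = (gmap (children.get ⟨j, h⟩)).1 *ᵥ v + (gmap (children.get ⟨j, h⟩)).2 := by
      intro j h x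
      exact key_alg _ _ (hgood _ (children.get_mem _)).1 v _ x
    have hsum1 : (children.map fun c => (gmap c).1).sum
        = ∑ j : Fin children.length, (gmap (children.get j)).1 := list_sum_fin _ _
    have hsum2 : (children.map fun c => (gmap c).2).sum
        = ∑ j : Fin children.length, (gmap (children.get j)).2 := list_sum_fin _ _
    constructor
    · intro hf
      cases hf with
      | node _ _ _ _ _ w hfeas hohm hkcl =>
        have hw : ∀ (j : Fin children.length),
            (w j).2 = (gmap (children.get j)).1 *ᵥ v + (gmap (children.get j)).2 := by
          intro j
          refine (hkey j j.2 _).1 ?_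
          have h1 := (ihmain j j.2 _ _).1 (hfeas j j.2)
          have h2 := hohm j j.2
          have h3 : (w j).1 = v - (children.get ⟨j, j.2⟩).1 *ᵥ (w j).2 := by
            rw [← h2]; abel
          rw [h3] at h1
          exact h1
        have hs : ∑ j ∈ Finset.range children.length, (w j).2
            = ∑ j : Fin children.length,
                ((gmap (children.get j)).1 *ᵥ v + (gmap (children.get j)).2) := by
          rw [← Fin.sum_univ_eq_sum_range]
          exact Finset.sum_congr rfl fun j _ => hw j
        rw [hkcl, hs, Finset.sum_add_distrib]
        simp only [hsum1, hsum2, Matrix.add_mulVec, sum_mulVec']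
        abel
    · intro hi
      refine FTree.Feasible.node A b children v i
        (fun j => if h : j < children.length then
          (v - (children.get ⟨j, h⟩).1 *ᵥ
              ((gmap (children.get ⟨j, h⟩)).1 *ᵥ v + (gmap (children.get ⟨j, h⟩)).2),
           (gmap (children.get ⟨j, h⟩)).1 *ᵥ v + (gmap (children.get ⟨j, h⟩)).2)
         else 0) ?_ ?_ ?_
      · intro j h
        simp only [dif_pos h]
        exact (ihmain j h _ _).2 ((hkey j h _).2 rfl)
      · intro j h
        simp only [dif_pos h]
        abel
      · rw [hi]
        have hs : ∑ j ∈ Finset.range children.length,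
            ((fun j => if h : j < children.length then
              (v - (children.get ⟨j, h⟩).1 *ᵥ
                  ((gmap (children.get ⟨j, h⟩)).1 *ᵥ v + (gmap (children.get ⟨j, h⟩)).2),
               (gmap (children.get ⟨j, h⟩)).1 *ᵥ v + (gmap (children.get ⟨j, h⟩)).2)
             else 0) j).2
            = ∑ j : Fin children.length,
                ((gmap (children.get j)).1 *ᵥ v + (gmap (children.get j)).2) := by
          rw [← Fin.sum_univ_eq_sum_range]
          refine Finset.sum_congr rfl fun j _ => ?_
          simp only [dif_pos j.2]
        rw [hs, Finset.sum_add_distrib]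
        simp only [hsum1, hsum2, Matrix.add_mulVec, sum_mulVec']
        abel
  termination_by t => sizeOf t
  decreasing_by
    exact sizeOf_child_lt (children.get_mem _) A b

/-- For a finite tree of converters satisfying the invertibility condition at
each reduction stage, there exists a unique affine map `(A_T, b_T)`—the one
obtained by the bottom-up reduction—such that the root current equals
`A_T ·ᵥ v + b_T` for every root voltage `v`. -/
theorem tree_reduction {m : ℕ} (t : FTree m) (hgood : t.good) :
    (∀ v i : Fin m → ℝ, t.Feasible v i ↔ i = t.reduce.1 *ᵥ v + t.reduce.2) ∧
    ∀ (A' : Matrix (Fin m) (Fin m) ℝ) (b' : Fin m → ℝ),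
      (∀ v i : Fin m → ℝ, t.Feasible v i → i = A' *ᵥ v + b') →
      A' = t.reduce.1 ∧ b' = t.reduce.2 := by
  have hmain := main_iff t hgood
  refine ⟨hmain, fun A' b' hAb => ?_⟩
  have hall : ∀ v : Fin m → ℝ, t.reduce.1 *ᵥ v + t.reduce.2 = A' *ᵥ v + b' := by
    intro v
    exact hAb v _ ((hmain v _).2 rfl)
  have hb : b' = t.reduce.2 := by
    have := hall 0
    simpa [Matrix.mulVec_zero] using this.symm
  refine ⟨?_, hb⟩
  ext i j
  have := hall (Pi.single j 1)
  rw [hb] at this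
  have h2 : t.reduce.1 *ᵥ Pi.single j 1 = A' *ᵥ Pi.single j 1 := by
    have := add_right_cancel this
    exact this
  have := congrFun h2 i
  simpa [Matrix.mulVec_single] using this.symm
end
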